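/- arXiv:1811.05758 — 2 statements merged into one kernel-verified Lean document; each statement's English description precedes it below -/
import Mathlib

section
/- For every integer D ≥ 5 there exists a constant k(D) > 0 such that for all a₀ > 0 the Lebesgue measure of the truncated valley satisfies μ(Ω_{a₀}) ≤ k(D) · a₀^{4−D}. -/
open MeasureTheory

/-- The cross product on `ℝ³` viewed as `EuclideanSpace ℝ (Fin 3)`. -/
noncomputable def cross3 (u v : EuclideanSpace ℝ (Fin 3)) : EuclideanSpace ℝ (Fin 3) :=
  (WithLp.equiv 2 (Fin 3 → ℝ)).symm
    (crossProduct ((WithLp.equiv 2 (Fin 3 → ℝ)) u) ((WithLp.equiv 2 (Fin 3 → ℝ)) v))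

/-- The SU(2) bosonic membrane potential
`V_B(X) = (1/2) ∑_{i,j} |X_i × X_j|²`. -/
noncomputable def VB (D : ℕ) (X : Fin D → EuclideanSpace ℝ (Fin 3)) : ℝ :=
  (1 / 2) * ∑ i, ∑ j, ‖cross3 (X i) (X j)‖ ^ 2

/-- The Euclidean norm of a configuration `X = (X₁, …, X_D)` viewed as a point
of `ℝ^{3D}`. -/
noncomputable def confNorm (D : ℕ) (X : Fin D → EuclideanSpace ℝ (Fin 3)) : ℝ :=
  Real.sqrt (∑ i, ‖X i‖ ^ 2)

local notation "E3" => EuclideanSpace ℝ (Fin 3)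

open scoped ENNReal

lemma cross3_norm_sq (u v : EuclideanSpace ℝ (Fin 3)) :
    ‖cross3 u v‖^2 = ‖u‖^2*‖v‖^2 - (inner ℝ u v : ℝ)^2 := by
  have h := cross_dot_cross ((WithLp.equiv 2 (Fin 3 → ℝ)) u) ((WithLp.equiv 2 (Fin 3 → ℝ)) v)
    ((WithLp.equiv 2 (Fin 3 → ℝ)) u) ((WithLp.equiv 2 (Fin 3 → ℝ)) v)
  simp only [← real_inner_self_eq_norm_sq, cross3]
  simp only [PiLp.inner_apply, RCLike.inner_apply, conj_trivial, dotProduct,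
    WithLp.equiv_symm_apply, WithLp.equiv_apply, PiLp.toLp_apply] at *
  have e1 : ∑ x : Fin 3, u x ^ 2 = ∑ x : Fin 3, u x * u x := by simp [sq]
  have e2 : ∑ x : Fin 3, v x ^ 2 = ∑ x : Fin 3, v x * v x := by simp [sq]
  have e3 : ∑ x : Fin 3, v x * u x = ∑ x : Fin 3, u x * v x :=
    Finset.sum_congr rfl fun x _ => mul_comm _ _
  rw [← e3] at h
  rw [h]; ring

lemma continuous_cross3 :
    Continuous fun p : (EuclideanSpace ℝ (Fin 3)) × (EuclideanSpace ℝ (Fin 3)) =>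
      cross3 p.1 p.2 := by
  unfold cross3
  apply (PiLp.continuous_toLp 2 (fun _ : Fin 3 => ℝ)).comp
  apply continuous_pi
  intro i
  simp only [cross_apply, WithLp.equiv_apply]
  fin_cases i <;> simp <;> fun_prop

lemma slab_volume_le (u : E3) (hu : ‖u‖ = 1) (R ε : ℝ) (hR : 0 ≤ R) (hε : 0 ≤ ε) :
    volume {y : E3 | ‖y‖ ≤ R ∧ ‖y‖^2 - (inner ℝ u y : ℝ)^2 ≤ ε^2} ≤
      ENNReal.ofReal (8 * R * ε^2) := by
  obtain ⟨b, hb⟩ : ∃ b : OrthonormalBasis (Fin 3) ℝ E3, b 0 = u := by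
    have hcard : Module.finrank ℝ E3 = Fintype.card (Fin 3) := by simp
    have hv : Orthonormal ℝ (Set.restrict ({0} : Set (Fin 3)) (fun _ => u)) := by
      constructor
      · intro i; exact hu
      · intro i j hij
        exact absurd (Subtype.ext (by
          have hi := i.2; have hj := j.2
          simp only [Set.mem_singleton_iff] at hi hj
          rw [hi, hj])) hij
    obtain ⟨b, hb⟩ := hv.exists_orthonormalBasis_extension_of_card_eq hcard
    exact ⟨b, hb 0 rfl⟩
  set r : Fin 3 → ℝ := ![R, ε, ε] with hr
  set Box : Set (EuclideanSpace ℝ (Fin 3)) :=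
    (MeasurableEquiv.toLp 2 (Fin 3 → ℝ)).symm ⁻¹' (Set.univ.pi fun i => Set.Icc (-(r i)) (r i))
    with hBox
  have hBoxmeas : MeasurableSet Box :=
    (MeasurableEquiv.toLp 2 (Fin 3 → ℝ)).symm.measurable
      (MeasurableSet.univ_pi fun i => measurableSet_Icc)
  have hsub : {y : E3 | ‖y‖ ≤ R ∧ ‖y‖^2 - (inner ℝ u y : ℝ)^2 ≤ ε^2} ⊆ b.repr ⁻¹' Box := by
    rintro y ⟨hy1, hy2⟩
    have hnorm : ‖b.repr y‖ = ‖y‖ := b.repr.norm_map y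
    have hsum : ‖y‖^2 = ∑ i, (b.repr y i)^2 := by
      rw [← hnorm, EuclideanSpace.norm_eq, Real.sq_sqrt (by positivity)]
      simp [sq_abs]
    have h0 : b.repr y 0 = (inner ℝ u y : ℝ) := by rw [← hb, b.repr_apply_apply]
    have hsum3 : ‖y‖^2 = (b.repr y 0)^2 + (b.repr y 1)^2 + (b.repr y 2)^2 := by
      rw [hsum, Fin.sum_univ_three]
    have hy2' : ‖y‖^2 - (b.repr y 0)^2 ≤ ε^2 := by rw [h0]; exact hy2
    have key : ∀ i : Fin 3, (b.repr y i)^2 ≤ (r i)^2 → |b.repr y i| ≤ r i := by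
      intro i h
      have := Real.sqrt_le_sqrt h
      rwa [Real.sqrt_sq_eq_abs, Real.sqrt_sq (by fin_cases i <;> simpa [hr])] at this
    have habs : ∀ i, |b.repr y i| ≤ r i := by
      intro i
      fin_cases i
      · refine key 0 ?_
        show (b.repr y 0)^2 ≤ R^2
        nlinarith [sq_nonneg (b.repr y 1), sq_nonneg (b.repr y 2), norm_nonneg y]
      · refine key 1 ?_
        show (b.repr y 1)^2 ≤ ε^2
        nlinarith [sq_nonneg (b.repr y 2)]
      · refine key 2 ?_
        show (b.repr y 2)^2 ≤ ε^2
        nlinarith [sq_nonneg (b.repr y 1)]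
    intro i _
    simp only [Set.mem_Icc]
    exact abs_le.mp (habs i)
  calc volume {y : E3 | ‖y‖ ≤ R ∧ ‖y‖^2 - (inner ℝ u y : ℝ)^2 ≤ ε^2}
      ≤ volume (b.repr ⁻¹' Box) := measure_mono hsub
    _ = volume Box := b.measurePreserving_repr.measure_preimage hBoxmeas.nullMeasurableSet
    _ = volume (Set.univ.pi fun i => Set.Icc (-(r i)) (r i)) :=
        (EuclideanSpace.volume_preserving_symm_measurableEquiv_toLp (Fin 3)).measure_preimage
          (MeasurableSet.univ_pi fun i => measurableSet_Icc).nullMeasurableSet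
    _ = ∏ i, volume (Set.Icc (-(r i)) (r i)) := volume_pi_pi _
    _ ≤ ENNReal.ofReal (8 * R * ε^2) := by
        simp only [Real.volume_Icc, Fin.prod_univ_three, hr]
        norm_num
        rw [← ENNReal.ofReal_mul (by linarith), ← ENNReal.ofReal_mul (by positivity)]
        exact ENNReal.ofReal_le_ofReal (by simp only [Matrix.cons_val_two, Matrix.tail_cons, Matrix.head_cons]; nlinarith)

lemma ball_volume_le (R : ℝ) (hR : 0 ≤ R) :
    volume {y : E3 | ‖y‖ ≤ R} ≤ ENNReal.ofReal (8 * R^3) := by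
  have hu : ‖(EuclideanSpace.single 0 (1:ℝ) : E3)‖ = 1 := by
    simp [EuclideanSpace.norm_single]
  calc volume {y : E3 | ‖y‖ ≤ R}
      ≤ volume {y : E3 | ‖y‖ ≤ R ∧
          ‖y‖^2 - (inner ℝ (EuclideanSpace.single 0 (1:ℝ) : E3) y : ℝ)^2 ≤ R^2} := by
        apply measure_mono
        intro y hy
        refine ⟨hy, ?_⟩
        have h1 : ‖y‖^2 ≤ R^2 := by nlinarith [norm_nonneg y, Set.mem_setOf_eq ▸ hy]
        nlinarith [sq_nonneg (inner ℝ (EuclideanSpace.single 0 (1:ℝ) : E3) y : ℝ)]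
    _ ≤ ENNReal.ofReal (8 * R * R^2) := slab_volume_le _ hu R R hR hR
    _ = ENNReal.ofReal (8 * R^3) := by ring_nf


lemma cyl_volume_le (x : E3) (hx : 0 < ‖x‖) :
    volume {y : E3 | ‖y‖ ≤ ‖x‖ ∧ ‖cross3 y x‖ ≤ 1} ≤ ENNReal.ofReal (8 / ‖x‖) := by
  have hx0 : x ≠ 0 := by intro h; rw [h] at hx; simp at hx
  set u : E3 := ‖x‖⁻¹ • x with hu
  have hu1 : ‖u‖ = 1 := norm_smul_inv_norm hx0
  calc volume {y : E3 | ‖y‖ ≤ ‖x‖ ∧ ‖cross3 y x‖ ≤ 1}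
      ≤ volume {y : E3 | ‖y‖ ≤ ‖x‖ ∧ ‖y‖^2 - (inner ℝ u y : ℝ)^2 ≤ (1/‖x‖)^2} := by
        apply measure_mono
        rintro y ⟨hy1, hy2⟩
        refine ⟨hy1, ?_⟩
        have hc : ‖cross3 y x‖^2 ≤ 1 := by nlinarith [norm_nonneg (cross3 y x)]
        rw [cross3_norm_sq] at hc
        have hinner : (inner ℝ u y : ℝ) = ‖x‖⁻¹ * (inner ℝ x y : ℝ) := by
          rw [hu, real_inner_smul_left]
        rw [← real_inner_comm y x] at hc
        rw [hinner]
        have hx2 : (0:ℝ) < ‖x‖^2 := by positivity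
        have e : (‖x‖⁻¹ * (inner ℝ x y : ℝ))^2 = (inner ℝ x y : ℝ)^2/‖x‖^2 := by field_simp
        have e2 : ((1:ℝ)/‖x‖)^2 = 1/‖x‖^2 := by field_simp
        rw [e, e2, sub_le_iff_le_add, ← add_div, le_div_iff₀ hx2]
        linarith
    _ ≤ ENNReal.ofReal (8 * ‖x‖ * (1/‖x‖)^2) :=
        slab_volume_le u hu1 ‖x‖ (1/‖x‖) (norm_nonneg x) (by positivity)
    _ = ENNReal.ofReal (8 / ‖x‖) := by
        congr 1
        field_simp

set_option maxHeartbeats 1000000 in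
lemma measurable_cross3_norm {D : ℕ} (j i₀ : Fin D) :
    Measurable fun X : Fin D → E3 => ‖cross3 (X j) (X i₀)‖ := by
  have h1 : Continuous fun X : Fin D → E3 => (X j, X i₀) :=
    (continuous_apply j).prodMk (continuous_apply i₀)
  exact (continuous_cross3.comp h1).norm.measurable


lemma T_volume_le (D : ℕ) (i₀ : Fin D) (m : ℕ) (L : ℝ) (hL : 0 < L) :
    volume {X : Fin D → E3 | (2^m*L ≤ ‖X i₀‖ ∧ ‖X i₀‖ ≤ 2^(m+1)*L) ∧
        ∀ j, j ≠ i₀ → (‖X j‖ ≤ ‖X i₀‖ ∧ ‖cross3 (X j) (X i₀)‖ ≤ 1)} ≤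
      ENNReal.ofReal (8/(2^m*L))^(D-1) * ENNReal.ofReal (8*(2^(m+1)*L)^3) := by
  set A : Set E3 := {x | 2^m*L ≤ ‖x‖ ∧ ‖x‖ ≤ 2^(m+1)*L} with hA
  set B : E3 → Set E3 := fun x => {y | ‖y‖ ≤ ‖x‖ ∧ ‖cross3 y x‖ ≤ 1} with hB
  set T : Set (Fin D → E3) := {X | X i₀ ∈ A ∧ ∀ j, j ≠ i₀ → X j ∈ B (X i₀)} with hT
  have hAmeas : MeasurableSet A := by
    apply MeasurableSet.inter
    · exact measurableSet_le measurable_const measurable_norm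
    · exact measurableSet_le measurable_norm measurable_const
  have hTmeas : MeasurableSet T := by
    have hTeq : T = ((fun X : Fin D → E3 => X i₀) ⁻¹' A) ∩
        ⋂ j, ⋂ (_ : j ≠ i₀),
          ({X : Fin D → E3 | ‖X j‖ ≤ ‖X i₀‖} ∩ {X | ‖cross3 (X j) (X i₀)‖ ≤ 1}) := by
      ext X
      constructor
      · rintro ⟨h1, h2⟩
        exact ⟨h1, Set.mem_iInter.2 fun j => Set.mem_iInter.2 fun hj => (h2 j hj : _)⟩
      · rintro ⟨h1, h2⟩
        refine ⟨h1, fun j hj => ?_⟩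
        exact Set.mem_iInter.1 (Set.mem_iInter.1 h2 j) hj
    rw [hTeq]
    refine MeasurableSet.inter (hAmeas.preimage (measurable_pi_apply i₀)) ?_
    refine MeasurableSet.iInter fun j => MeasurableSet.iInter fun hj => ?_
    refine MeasurableSet.inter ?_ ?_
    · exact measurableSet_le ((measurable_pi_apply j).norm) ((measurable_pi_apply i₀).norm)
    · exact measurableSet_le (measurable_cross3_norm j i₀) measurable_const
  -- split off coordinate i₀
  set p : Fin D → Prop := fun j => j = i₀ with hp
  set e := MeasurableEquiv.piEquivPiSubtypeProd (fun _ : Fin D => E3) p with he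
  letI : DecidablePred p := fun j => inferInstanceAs (Decidable (j = i₀))
  letI : Fintype (Subtype p) := Subtype.fintype p
  letI : Fintype {j // ¬ p j} := Subtype.fintype _
  have mp := MeasureTheory.volume_preserving_piEquivPiSubtypeProd (fun _ : Fin D => E3) p
  have hTim : MeasurableSet (e '' T) := e.measurableSet_image.2 hTmeas
  show volume T ≤ _
  rw [← Set.preimage_image_eq T e.injective, mp.measure_preimage hTim.nullMeasurableSet]
  rw [Measure.volume_eq_prod, Measure.prod_apply hTim]
  have hpow : (0:ℝ) < 2^m*L := by positivity
  have him : ⇑e '' T = ⇑e.symm ⁻¹' T := Equiv.image_eq_preimage_symm e.toEquiv T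
  have hslice : ∀ ξ : Subtype p → E3, volume (Prod.mk ξ ⁻¹' (⇑e '' T)) ≤
      (Set.univ.pi fun _ : Subtype p => A).indicator
        (fun _ => ENNReal.ofReal (8/(2^m*L)) ^ (D-1)) ξ := by
    intro ξ
    set x : E3 := ξ ⟨i₀, rfl⟩ with hx
    have hXi₀ : ∀ Y : {j // ¬ p j} → E3, (e.symm (ξ, Y)) i₀ = x := by
      intro Y
      simp only [he, MeasurableEquiv.piEquivPiSubtypeProd, MeasurableEquiv.symm_mk,
        MeasurableEquiv.coe_mk, Equiv.piEquivPiSubtypeProd_symm_apply]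
      exact dif_pos rfl
    have hXj : ∀ (Y : {j // ¬ p j} → E3) (j : {j // ¬ p j}), (e.symm (ξ, Y)) j.1 = Y j := by
      intro Y j
      simp only [he, MeasurableEquiv.piEquivPiSubtypeProd, MeasurableEquiv.symm_mk,
        MeasurableEquiv.coe_mk, Equiv.piEquivPiSubtypeProd_symm_apply]
      rw [dif_neg j.2]
    by_cases hxA : x ∈ A
    · rw [Set.indicator_of_mem (by
        intro jj _
        have : jj = ⟨i₀, rfl⟩ := Subtype.ext jj.2
        rw [this]; exact hxA)]
      have hxpos : 0 < ‖x‖ := lt_of_lt_of_le hpow hxA.1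
      calc volume (Prod.mk ξ ⁻¹' (⇑e '' T))
          ≤ volume (Set.univ.pi fun _ : {j // ¬ p j} => B x) := by
            apply measure_mono
            intro Y hY
            rw [him] at hY
            have hYT : e.symm (ξ, Y) ∈ T := hY
            intro jj _
            have h2 := hYT.2 jj.1 jj.2
            rw [hXi₀ Y, hXj Y jj] at h2
            exact h2
        _ = ∏ _jj : {j // ¬ p j}, volume (B x) := volume_pi_pi _
        _ = volume (B x) ^ (D-1) := by
            rw [Finset.prod_const]
            congr 1
            simp [hp, Fintype.card_subtype_compl, Finset.card_univ]
        _ ≤ ENNReal.ofReal (8/(2^m*L)) ^ (D-1) := by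
            gcongr
            refine le_trans (cyl_volume_le x hxpos) (ENNReal.ofReal_le_ofReal ?_)
            exact div_le_div_of_nonneg_left (by norm_num) hpow hxA.1
    · have hempty : Prod.mk ξ ⁻¹' (⇑e '' T) = ∅ := by
        ext Y
        simp only [Set.mem_preimage, Set.mem_empty_iff_false, iff_false]
        intro hY
        rw [him] at hY
        have hYT : e.symm (ξ, Y) ∈ T := hY
        have := hYT.1
        rw [hXi₀ Y] at this
        exact hxA this
      rw [hempty, measure_empty]
      simp
  refine le_trans (lintegral_mono hslice) ?_
  rw [lintegral_indicator_const (MeasurableSet.univ_pi fun _ => hAmeas)]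
  apply mul_le_mul_right
  haveI : Unique (Subtype p) := ⟨⟨⟨i₀, rfl⟩⟩, fun j => Subtype.ext j.2⟩
  refine le_trans (le_of_eq (volume_pi_pi fun _ => A)) ?_
  rw [Finset.univ_unique, Finset.prod_singleton]
  exact le_trans (measure_mono fun x hx => hx.2) (ball_volume_le _ (by positivity))

lemma cross3_norm_symm (u v : EuclideanSpace ℝ (Fin 3)) : ‖cross3 u v‖ = ‖cross3 v u‖ := by
  have h : ‖cross3 u v‖^2 = ‖cross3 v u‖^2 := by
    rw [cross3_norm_sq, cross3_norm_sq, real_inner_comm]; ring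
  have := congrArg Real.sqrt h
  rwa [Real.sqrt_sq (norm_nonneg _), Real.sqrt_sq (norm_nonneg _)] at this


/-- For every integer `D ≥ 5` there is a constant `k(D) > 0` such that for every
`a₀ > 0` the Lebesgue measure of the truncated valley
`Ω_{a₀} = {X ∈ (ℝ³)^D : V_B(X) < 1, |X| ≥ a₀}` satisfies
`μ(Ω_{a₀}) ≤ k(D) · a₀^{4 − D}`. -/
theorem measure_truncated_valley_le (D : ℕ) (hD : 5 ≤ D) :
    ∃ k : ℝ, 0 < k ∧ ∀ a₀ : ℝ, 0 < a₀ →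
      volume {X : Fin D → EuclideanSpace ℝ (Fin 3) | VB D X < 1 ∧ a₀ ≤ confNorm D X} ≤
        ENNReal.ofReal (k * a₀ ^ ((4 : ℤ) - (D : ℤ))) := by
  obtain ⟨d, rfl⟩ : ∃ d, D = d + 5 := ⟨D - 5, by omega⟩
  set sD : ℝ := Real.sqrt (d + 5) with hsD
  have hsDpos : 0 < sD := Real.sqrt_pos.2 (by positivity)
  refine ⟨(d+5) * 2 * (8^(d+4) * 64) * sD^(d+1), by positivity, ?_⟩
  intro a₀ ha₀
  set L : ℝ := a₀ / sD with hLdef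
  have hL : 0 < L := div_pos ha₀ hsDpos
  set T : Fin (d+5) → ℕ → Set (Fin (d+5) → E3) := fun i₀ m =>
    {X : Fin (d+5) → E3 | (2^m*L ≤ ‖X i₀‖ ∧ ‖X i₀‖ ≤ 2^(m+1)*L) ∧
        ∀ j, j ≠ i₀ → (‖X j‖ ≤ ‖X i₀‖ ∧ ‖cross3 (X j) (X i₀)‖ ≤ 1)} with hTdef
  -- covering
  have hcov : {X : Fin (d+5) → EuclideanSpace ℝ (Fin 3) | VB (d+5) X < 1 ∧
      a₀ ≤ confNorm (d+5) X} ⊆ ⋃ i₀, ⋃ m, T i₀ m := by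
    rintro X ⟨h1, h2⟩
    obtain ⟨i₀, -, hmax⟩ := Finset.exists_max_image Finset.univ (fun i => ‖X i‖)
      Finset.univ_nonempty
    have hmax' : ∀ j, ‖X j‖ ≤ ‖X i₀‖ := fun j => hmax j (Finset.mem_univ j)
    -- L ≤ ‖X i₀‖
    have hsum_le : ∑ i, ‖X i‖^2 ≤ (d+5 : ℝ) * ‖X i₀‖^2 := by
      calc ∑ i, ‖X i‖^2 ≤ ∑ _i : Fin (d+5), ‖X i₀‖^2 :=
            Finset.sum_le_sum fun i _ => by
              have := hmax' i; nlinarith [norm_nonneg (X i)]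
        _ = (d+5 : ℝ) * ‖X i₀‖^2 := by
            rw [Finset.sum_const, Finset.card_univ, Fintype.card_fin, nsmul_eq_mul]
            push_cast; ring
    have hLle : L ≤ ‖X i₀‖ := by
      have h3 : a₀ ≤ sD * ‖X i₀‖ := by
        calc a₀ ≤ confNorm (d+5) X := h2
          _ ≤ Real.sqrt ((d+5 : ℝ) * ‖X i₀‖^2) := Real.sqrt_le_sqrt hsum_le
          _ = sD * ‖X i₀‖ := by
              rw [Real.sqrt_mul (by positivity), Real.sqrt_sq (norm_nonneg _)]
      rw [hLdef, div_le_iff₀ hsDpos]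
      linarith [h3]
    have hXpos : 0 < ‖X i₀‖ := lt_of_lt_of_le hL hLle
    -- cross bounds
    have hcross : ∀ j, j ≠ i₀ → ‖cross3 (X j) (X i₀)‖ ≤ 1 := by
      intro j hj
      have hnn : ∀ i k : Fin (d+5), (0:ℝ) ≤ ‖cross3 (X i) (X k)‖^2 := fun i k => by positivity
      have hgnn : ∀ i : Fin (d+5), (0:ℝ) ≤ ∑ k, ‖cross3 (X i) (X k)‖^2 := fun i =>
        Finset.sum_nonneg fun k _ => hnn i k
      have hsumlt : ∑ i, ∑ k, ‖cross3 (X i) (X k)‖^2 < 2 := by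
        have := h1; rw [VB] at this; linarith
      have hpair : (∑ k, ‖cross3 (X j) (X k)‖^2) + (∑ k, ‖cross3 (X i₀) (X k)‖^2) ≤
          ∑ i, ∑ k, ‖cross3 (X i) (X k)‖^2 := by
        rw [← Finset.sum_pair hj (f := fun i => ∑ k, ‖cross3 (X i) (X k)‖^2)]
        exact Finset.sum_le_sum_of_subset_of_nonneg (Finset.subset_univ _)
          (fun i _ _ => hgnn i)
      have ht1 : ‖cross3 (X j) (X i₀)‖^2 ≤ ∑ k, ‖cross3 (X j) (X k)‖^2 :=
        Finset.single_le_sum (fun k _ => hnn j k) (Finset.mem_univ i₀)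
      have ht2 : ‖cross3 (X i₀) (X j)‖^2 ≤ ∑ k, ‖cross3 (X i₀) (X k)‖^2 :=
        Finset.single_le_sum (fun k _ => hnn i₀ k) (Finset.mem_univ j)
      have hsymm : ‖cross3 (X i₀) (X j)‖ = ‖cross3 (X j) (X i₀)‖ := cross3_norm_symm _ _
      rw [hsymm] at ht2
      have hlt1 : ‖cross3 (X j) (X i₀)‖^2 < 1 := by linarith
      nlinarith [norm_nonneg (cross3 (X j) (X i₀))]
    -- dyadic index
    have ht1 : 1 ≤ ‖X i₀‖ / L := (one_le_div hL).2 hLle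
    set t : ℝ := ‖X i₀‖ / L with htdef
    set n : ℕ := ⌊t⌋₊ with hndef
    have hn1 : 1 ≤ n := Nat.le_floor (by exact_mod_cast ht1)
    set m : ℕ := Nat.log 2 n with hmdef
    have h2m : (2:ℝ)^m ≤ t := by
      have h := Nat.pow_log_le_self 2 (by omega : n ≠ 0)
      calc (2:ℝ)^m = ((2^m : ℕ) : ℝ) := by push_cast; ring
        _ ≤ (n : ℝ) := by exact_mod_cast h
        _ ≤ t := Nat.floor_le (by positivity)
    have h2m' : t ≤ (2:ℝ)^(m+1) := by
      have h := Nat.lt_pow_succ_log_self (by norm_num : 1 < 2) n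
      have h' : (n:ℝ) + 1 ≤ ((2^(m+1) : ℕ) : ℝ) := by exact_mod_cast h
      have := Nat.lt_floor_add_one t
      push_cast at h' ⊢
      linarith
    refine Set.mem_iUnion.2 ⟨i₀, Set.mem_iUnion.2 ⟨m, ?_⟩⟩
    refine ⟨⟨?_, ?_⟩, fun j hj => ⟨hmax' j, hcross j hj⟩⟩
    · rw [htdef] at h2m
      calc (2:ℝ)^m * L ≤ (‖X i₀‖/L) * L := by nlinarith
        _ = ‖X i₀‖ := by field_simp
    · rw [htdef] at h2m'
      calc ‖X i₀‖ = (‖X i₀‖/L) * L := by field_simp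
        _ ≤ 2^(m+1) * L := by nlinarith
  -- sum the bounds
  calc volume {X : Fin (d+5) → EuclideanSpace ℝ (Fin 3) | VB (d+5) X < 1 ∧
        a₀ ≤ confNorm (d+5) X}
      ≤ volume (⋃ i₀, ⋃ m, T i₀ m) := measure_mono hcov
    _ ≤ ∑' i₀ : Fin (d+5), volume (⋃ m, T i₀ m) := measure_iUnion_le _
    _ ≤ ∑' i₀ : Fin (d+5), ∑' m : ℕ, volume (T i₀ m) :=
        ENNReal.tsum_le_tsum fun i₀ => measure_iUnion_le _
    _ ≤ ∑' i₀ : Fin (d+5), ∑' m : ℕ,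
          ENNReal.ofReal (8/(2^m*L))^(d+4) * ENNReal.ofReal (8*(2^(m+1)*L)^3) := by
        refine ENNReal.tsum_le_tsum fun i₀ => ENNReal.tsum_le_tsum fun m => ?_
        have := T_volume_le (d+5) i₀ m L hL
        simpa using this
    _ ≤ ENNReal.ofReal ((d+5) * 2 * (8^(d+4) * 64) * sD^(d+1) * a₀ ^ ((4:ℤ) - ((d:ℤ)+5))) := by
        set C : ℝ≥0∞ := ENNReal.ofReal (8^(d+4)*64/L^(d+1)) with hC
        set r : ℝ≥0∞ := ENNReal.ofReal ((1/2:ℝ)^(d+1)) with hr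
        have hofr : ∀ m : ℕ,
            ENNReal.ofReal (8/(2^m*L))^(d+4) * ENNReal.ofReal (8*(2^(m+1)*L)^3)
              = C * r^m := by
          intro m
          rw [hC, hr, ← ENNReal.ofReal_pow (by positivity),
            ← ENNReal.ofReal_pow (by positivity),
            ← ENNReal.ofReal_mul (by positivity), ← ENNReal.ofReal_mul (by positivity)]
          congr 1
          have h2 : (2:ℝ)^m ≠ 0 := by positivity
          field_simp
          have hLL : L ^ 4 * L ^ d * L⁻¹ ^ 4 * L⁻¹ ^ d = 1 := by
            have hL0 : L ≠ 0 := ne_of_gt hL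
            rw [inv_pow, inv_pow]; field_simp
          have h22 : (2:ℝ)⁻¹ ^ (m * 4) * 2 ^ (m * 3) = (1/2) ^ m := by
            rw [pow_mul, pow_mul, inv_pow, one_div_pow]
            field_simp
          ring_nf
          rw [hLL]
          linear_combination ((1 / 2 : ℝ) ^ (m * d) * 8 ^ d * 262144) * h22
        have hgeo : ∑' m : ℕ, r^m ≤ 2 := by
          rw [ENNReal.tsum_geometric]
          have hr2 : r ≤ 2⁻¹ := by
            rw [hr, show ((2:ℝ≥0∞))⁻¹ = ENNReal.ofReal (1/2:ℝ) by
              rw [show (1/2:ℝ) = (2:ℝ)⁻¹ by norm_num, ENNReal.ofReal_inv_of_pos (by norm_num)]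
              norm_num]
            apply ENNReal.ofReal_le_ofReal
            calc ((1:ℝ)/2)^(d+1) ≤ (1/2)^1 :=
                  pow_le_pow_of_le_one (by norm_num) (by norm_num) (by omega)
              _ = 1/2 := pow_one _
          calc (1 - r)⁻¹ ≤ (1 - 2⁻¹)⁻¹ :=
                ENNReal.inv_le_inv' (tsub_le_tsub_left hr2 1)
            _ = (2⁻¹)⁻¹ := by rw [ENNReal.one_sub_inv_two]
            _ = 2 := by simp
        have hsum1 : ∀ _i₀ : Fin (d+5),
            (∑' m : ℕ, ENNReal.ofReal (8/(2^m*L))^(d+4)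
              * ENNReal.ofReal (8*(2^(m+1)*L)^3)) ≤ C * 2 := by
          intro _
          calc (∑' m : ℕ, ENNReal.ofReal (8/(2^m*L))^(d+4)
                * ENNReal.ofReal (8*(2^(m+1)*L)^3))
              = ∑' m : ℕ, C * r^m := by simp only [hofr]
            _ = C * ∑' m : ℕ, r^m := ENNReal.tsum_mul_left
            _ ≤ C * 2 := mul_le_mul_right hgeo _
        calc (∑' i₀ : Fin (d+5), ∑' m : ℕ,
              ENNReal.ofReal (8/(2^m*L))^(d+4) * ENNReal.ofReal (8*(2^(m+1)*L)^3))
            ≤ ∑' _i₀ : Fin (d+5), C * 2 := ENNReal.tsum_le_tsum hsum1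
          _ = ((d+5 : ℕ) : ℝ≥0∞) * (C * 2) := by
              rw [tsum_fintype]
              rw [Finset.sum_const, Finset.card_univ, Fintype.card_fin, nsmul_eq_mul]
          _ = ENNReal.ofReal ((d+5) * 2 * (8^(d+4) * 64) * sD^(d+1)
                * a₀ ^ ((4:ℤ) - ((d:ℤ)+5))) := by
              rw [hC, ← ENNReal.ofReal_natCast (d+5), ← ENNReal.ofReal_ofNat 2,
                ← ENNReal.ofReal_mul (by positivity), ← ENNReal.ofReal_mul (by positivity)]
              congr 1
              have hz : a₀ ^ ((4:ℤ) - ((d:ℤ)+5)) = (a₀^(d+1))⁻¹ := by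
                rw [show (4:ℤ)-((d:ℤ)+5) = -((d+1:ℕ):ℤ) by push_cast; ring,
                  zpow_neg, zpow_natCast]
              rw [hz, hLdef, div_pow]
              have ha' : a₀ ≠ 0 := ne_of_gt ha₀
              have hs' : sD ≠ 0 := ne_of_gt hsDpos
              push_cast
              field_simp
end

section
/- Let (e₁, e₂, e₃) be an orthonormal basis of ℝ³, let a ∈ ℝ, and for i = 2,…,D let X_i = b_i e₁ + c_i e₂ + d_i e₃. Set X₁ = a e₁ and let B = (b₂,…,b_D), C = (c₂,…,c_D), E = (d₂,…,d_D) ∈ ℝ^{D−1}. Then V_B(X₁,…,X_D) = a²(|C|² + |E|²) + |B|²|C|² − (B·C)² + |B|²|E|² − (B·E)² + |C|²|E|² − (C·E)². -/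
open RealInnerProductSpace

/-- Lagrange identity for the cross product. -/
lemma norm_cross3_sq (u v : EuclideanSpace ℝ (Fin 3)) :
    ‖cross3 u v‖ ^ 2 = ‖u‖ ^ 2 * ‖v‖ ^ 2 - ⟪u, v⟫ ^ 2 := by
  have h : ∀ w : EuclideanSpace ℝ (Fin 3), ‖w‖ ^ 2 = ⟪w, w⟫ :=
    fun w => (real_inner_self_eq_norm_sq w).symm
  rw [h, h, h]
  simp only [cross3, PiLp.inner_apply, RCLike.inner_apply, conj_trivial,
    WithLp.equiv_symm_apply, WithLp.equiv_apply, PiLp.toLp_apply, crossProduct,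
    LinearMap.mk₂_apply, Fin.sum_univ_three]
  simp [Matrix.cons_val_zero, Matrix.cons_val_one, Matrix.head_cons]
  ring

lemma inner_comb (e : Fin 3 → EuclideanSpace ℝ (Fin 3)) (he : Orthonormal ℝ e)
    (p q r p' q' r' : ℝ) :
    ⟪p • e 0 + q • e 1 + r • e 2, p' • e 0 + q' • e 1 + r' • e 2⟫ =
      p * p' + q * q' + r * r' := by
  have h := orthonormal_iff_ite.mp he
  simp only [inner_add_left, inner_add_right, real_inner_smul_left, real_inner_smul_right, h]
  simp [Fin.ext_iff]
  ring

/-- Let `(e₁, e₂, e₃)` be an orthonormal basis of `ℝ³`.  Consider a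
configuration of `D = m + 1 ≥ 2` vectors with `X₁ = a e₁` and
`Xᵢ = bᵢ e₁ + cᵢ e₂ + dᵢ e₃` for `i = 2, …, D`, and let
`B = (b₂, …, b_D)`, `C = (c₂, …, c_D)`, `E = (d₂, …, d_D) ∈ ℝ^{D−1}`.  Then
`V_B = a²(|C|² + |E|²) + |B|²|C|² − (B·C)² + |B|²|E|² − (B·E)² + |C|²|E|² − (C·E)²`. -/
theorem VB_in_adapted_coordinates (m : ℕ) (hm : 1 ≤ m)
    (e : Fin 3 → EuclideanSpace ℝ (Fin 3)) (he : Orthonormal ℝ e)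
    (a : ℝ) (B C E : EuclideanSpace ℝ (Fin m))
    (X : Fin (m + 1) → EuclideanSpace ℝ (Fin 3))
    (hX0 : X 0 = a • e 0)
    (hXs : ∀ i : Fin m, X i.succ = B i • e 0 + C i • e 1 + E i • e 2) :
    VB (m + 1) X =
      a ^ 2 * (‖C‖ ^ 2 + ‖E‖ ^ 2) + (‖B‖ ^ 2 * ‖C‖ ^ 2 - ⟪B, C⟫ ^ 2) +
        (‖B‖ ^ 2 * ‖E‖ ^ 2 - ⟪B, E⟫ ^ 2) + (‖C‖ ^ 2 * ‖E‖ ^ 2 - ⟪C, E⟫ ^ 2) := by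
  classical
  set β : Fin (m + 1) → ℝ := Fin.cons a (fun i => B i) with hβ
  set γ : Fin (m + 1) → ℝ := Fin.cons 0 (fun i => C i) with hγ
  set δ : Fin (m + 1) → ℝ := Fin.cons 0 (fun i => E i) with hδ
  have hX : ∀ i : Fin (m + 1), X i = β i • e 0 + γ i • e 1 + δ i • e 2 := by
    intro i
    refine Fin.cases ?_ ?_ i
    · simp [hβ, hγ, hδ, hX0]
    · intro j
      simp [hβ, hγ, hδ, hXs j]
  have hinner : ∀ i j : Fin (m + 1),
      ⟪X i, X j⟫ = β i * β j + γ i * γ j + δ i * δ j := by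
    intro i j
    rw [hX i, hX j, inner_comb e he]
  -- scalar sums
  set sb : ℝ := ∑ i, β i ^ 2 with hsb
  set sc : ℝ := ∑ i, γ i ^ 2 with hsc
  set sd : ℝ := ∑ i, δ i ^ 2 with hsd
  set sbc : ℝ := ∑ i, β i * γ i with hsbc
  set sbd : ℝ := ∑ i, β i * δ i with hsbd
  set scd : ℝ := ∑ i, γ i * δ i with hscd
  have hterm : ∀ i j : Fin (m + 1),
      ‖cross3 (X i) (X j)‖ ^ 2 =
        (β i ^ 2 + γ i ^ 2 + δ i ^ 2) * (β j ^ 2 + γ j ^ 2 + δ j ^ 2) -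
          (β i * β j + γ i * γ j + δ i * δ j) ^ 2 := by
    intro i j
    rw [norm_cross3_sq, ← real_inner_self_eq_norm_sq, ← real_inner_self_eq_norm_sq,
      hinner, hinner, hinner]
    ring
  have hrow : ∀ i : Fin (m + 1),
      (∑ j, ‖cross3 (X i) (X j)‖ ^ 2) =
        (β i ^ 2 + γ i ^ 2 + δ i ^ 2) * (sb + sc + sd) -
          (β i ^ 2 * sb + γ i ^ 2 * sc + δ i ^ 2 * sd +
            2 * (β i * γ i) * sbc + 2 * (β i * δ i) * sbd + 2 * (γ i * δ i) * scd) := by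
    intro i
    simp only [hterm i, hsb, hsc, hsd, hsbc, hsbd, hscd, Finset.mul_sum, Finset.sum_mul,
      ← Finset.sum_add_distrib, ← Finset.sum_sub_distrib]
    refine Finset.sum_congr rfl fun j _ => by ring
  have htot : (∑ i, ∑ j, ‖cross3 (X i) (X j)‖ ^ 2) =
      (sb + sc + sd) * (sb + sc + sd) -
        (sb * sb + sc * sc + sd * sd +
          2 * sbc * sbc + 2 * sbd * sbd + 2 * scd * scd) := by
    simp only [hrow]
    rw [Finset.sum_sub_distrib]
    congr 1
    · rw [← Finset.sum_mul, hsb, hsc, hsd, ← Finset.sum_add_distrib,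
        ← Finset.sum_add_distrib]
    · rw [hsb, hsc, hsd, hsbc, hsbd, hscd]
      simp only [Finset.sum_mul, Finset.mul_sum, ← Finset.sum_add_distrib]
      refine Finset.sum_congr rfl fun i _ => Finset.sum_congr rfl fun j _ => by ring
  -- identify the scalar sums
  have hnorm : ∀ Y : EuclideanSpace ℝ (Fin m), ‖Y‖ ^ 2 = ∑ i, Y i * Y i := by
    intro Y
    rw [← real_inner_self_eq_norm_sq]
    simp [PiLp.inner_apply]
    rw [EuclideanSpace.norm_sq_eq]
    simp [sq]
  have hip : ∀ Y Z : EuclideanSpace ℝ (Fin m), ⟪Y, Z⟫ = ∑ i, Y i * Z i := by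
    intro Y Z
    simp [PiLp.inner_apply]
    exact Finset.sum_congr rfl fun i _ => mul_comm _ _
  have hsb' : sb = a ^ 2 + ‖B‖ ^ 2 := by
    rw [hsb, Fin.sum_univ_succ, hnorm]
    simp [hβ, sq]
  have hsc' : sc = ‖C‖ ^ 2 := by
    rw [hsc, Fin.sum_univ_succ, hnorm]
    simp [hγ, sq]
  have hsd' : sd = ‖E‖ ^ 2 := by
    rw [hsd, Fin.sum_univ_succ, hnorm]
    simp [hδ, sq]
  have hsbc' : sbc = ⟪B, C⟫ := by
    rw [hsbc, Fin.sum_univ_succ, hip]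
    simp [hβ, hγ]
  have hsbd' : sbd = ⟪B, E⟫ := by
    rw [hsbd, Fin.sum_univ_succ, hip]
    simp [hβ, hδ]
  have hscd' : scd = ⟪C, E⟫ := by
    rw [hscd, Fin.sum_univ_succ, hip]
    simp [hγ, hδ]
  rw [VB, htot, hsb', hsc', hsd', hsbc', hsbd', hscd']
  ring
end
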